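/- Let T be a 2-isometry, u,v nonzero with ‖v‖=1, K = u⊗v, and suppose T̃ := T + K is a 2-isometry. Then for every x ∈ ker K (= v^⊥), 2 Re⟨KTx, T²x⟩ + ‖KTx‖² = 0. -/

import Mathlib

open ContinuousLinearMap

variable {H : Type*} [NormedAddCommGroup H] [InnerProductSpace ℂ H] [CompleteSpace H]

/-- The rank-one operator `u ⊗ v`, defined by `(u ⊗ v) h = ⟨h, v⟩ u`. -/
noncomputable def rankOne (u v : H) : H →L[ℂ] H := (innerSL ℂ v).smulRight u

/-- `Δ₂(T) = I - 2 T*T + T*²T²`. -/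
noncomputable def Delta2 (T : H →L[ℂ] H) : H →L[ℂ] H :=
  1 - 2 • (ContinuousLinearMap.adjoint T ∘L T)
    + ContinuousLinearMap.adjoint (T ∘L T) ∘L (T ∘L T)

lemma delta2_norm_eq (T : H →L[ℂ] H) (hT : Delta2 T = 0) (x : H) :
    (‖x‖ ^ 2 : ℝ) - 2 * ‖T x‖ ^ 2 + ‖T (T x)‖ ^ 2 = 0 := by
  have h : (inner ℂ x ((Delta2 T) x) : ℂ) = 0 := by rw [hT]; simp
  rw [Delta2] at h
  simp only [ContinuousLinearMap.add_apply, ContinuousLinearMap.sub_apply,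
    ContinuousLinearMap.smul_apply, ContinuousLinearMap.one_apply,
    ContinuousLinearMap.comp_apply, inner_add_right, inner_sub_right,
    ContinuousLinearMap.adjoint_inner_right, two_smul, inner_add_right] at h
  have h2 := congrArg Complex.re h
  simp only [← RCLike.re_to_complex] at h2
  simp only [map_sub, map_add, map_zero, inner_self_eq_norm_sq] at h2
  linarith

theorem stmt_5 (T : H →L[ℂ] H) (hT : Delta2 T = 0) (u v : H) (hu : u ≠ 0) (hv : v ≠ 0)
    (hv1 : ‖v‖ = 1) (K : H →L[ℂ] H) (hK : K = rankOne u v)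
    (hTt : Delta2 (T + K) = 0) :
    ∀ x : H, (inner ℂ v x : ℂ) = 0 →
      2 * (inner ℂ (K (T x)) (T (T x)) : ℂ).re + ‖K (T x)‖ ^ 2 = 0 := by
  intro x hx
  have hKx : K x = 0 := by
    rw [hK]; simp [rankOne, hx]
  have h1 := delta2_norm_eq T hT x
  have h2 := delta2_norm_eq (T + K) hTt x
  rw [ContinuousLinearMap.add_apply, hKx, add_zero, ContinuousLinearMap.add_apply] at h2
  have hexp := norm_add_sq (𝕜 := ℂ) (T (T x)) (K (T x))
  simp only [RCLike.re_to_complex] at hexp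
  have hsym : (inner ℂ (T (T x)) (K (T x)) : ℂ).re = (inner ℂ (K (T x)) (T (T x)) : ℂ).re :=
    inner_re_symm (𝕜 := ℂ) _ _
  rw [hsym] at hexp
  linarith
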